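/- arXiv:1405.4641 — 3 statements merged into one kernel-verified Lean document; each statement's English description precedes it below -/
import Mathlib

section
/- Let V be a real inner product space with inner product ⟪·,·⟫, let a : V × V → ℝ be a symmetric bilinear form, and let λ ∈ ℝ and u ∈ V satisfy a(u, v) = λ·⟪u, v⟫ for all v ∈ V. Then for every w ∈ V with w ≠ 0, a(w, w)/⟪w, w⟫ − λ = a(w − u, w − u)/⟪w, w⟫ − λ·⟪w − u, w − u⟫/⟪w, w⟫. -/
/-- Babuška–Osborn identity (Lemma 2.2): for a symmetric bilinear form `a` on a real
inner product space `V` and an eigenpair `(λ, u)` satisfying `a u v = λ ⟪u, v⟫` for all `v`,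
every nonzero `w` satisfies
`a w w / ⟪w, w⟫ − λ = a (w−u) (w−u) / ⟪w, w⟫ − λ ⟪w−u, w−u⟫ / ⟪w, w⟫`. -/
theorem babuska_osborn_identity
    {V : Type*} [NormedAddCommGroup V] [InnerProductSpace ℝ V]
    (a : V →ₗ[ℝ] V →ₗ[ℝ] ℝ)
    (hsymm : ∀ v v' : V, a v v' = a v' v)
    (lam : ℝ) (u : V)
    (heig : ∀ v : V, a u v = lam * (inner ℝ u v : ℝ))
    (w : V) (hw : w ≠ 0) :
    a w w / (inner ℝ w w : ℝ) - lam
      = a (w - u) (w - u) / (inner ℝ w w : ℝ)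
        - lam * (inner ℝ (w - u) (w - u) : ℝ) / (inner ℝ w w : ℝ) := by
  have h0 : (inner ℝ w w : ℝ) ≠ 0 := inner_self_ne_zero.mpr hw
  have hwu : a w u = lam * (inner ℝ u w : ℝ) := by rw [hsymm]; exact heig w
  have h1 : a (w - u) (w - u)
      = a w w - lam * (inner ℝ u w : ℝ) - lam * (inner ℝ u w : ℝ) + lam * (inner ℝ u u : ℝ) := by
    simp [map_sub, hwu, heig]
    ring
  have h2 : (inner ℝ (w - u) (w - u) : ℝ)
      = (inner ℝ w w : ℝ) - (inner ℝ u w : ℝ) - (inner ℝ u w : ℝ) + (inner ℝ u u : ℝ) := by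
    rw [inner_sub_sub_self, real_inner_comm w u]
  rw [h1, h2]
  field_simp
  ring
end

section
/- Let V and W be real inner product spaces, let g : V → W be a linear map, let b : V × V → ℝ be a symmetric bilinear form, and define the bilinear form a on V by a(v, v') = ⟪g v, g v'⟫_W + b(v, v'). Let λ ∈ ℝ and u ∈ V satisfy a(u, v) = λ·⟪u, v⟫ for all v ∈ V. Let w ∈ V with w ≠ 0 and let r ∈ W be arbitrary (the recovered gradient), and define the corrected eigenvalue approximation λ' = a(w, w)/⟪w, w⟫ − ‖g w − r‖²_W/⟪w, w⟫. Then λ' − λ = ( ‖r − g u‖²_W + 2·⟪r − g u, g w − r⟫_W + b(w − u, w − u) − λ·⟪w − u, w − u⟫ ) / ⟪w, w⟫. -/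
/-- Exact decomposition of the recovery-enhanced eigenvalue error (proof of Theorem 3.5):
with `a v v' = ⟪g v, g v'⟫ + b v v'`, eigenpair `(λ, u)` of `a`, `w ≠ 0`, recovered gradient
`r`, and `λ' = a w w / ⟪w, w⟫ − ‖g w − r‖² / ⟪w, w⟫`, one has
`λ' − λ = (‖r − g u‖² + 2⟪r − g u, g w − r⟫ + b (w−u) (w−u) − λ ⟪w−u, w−u⟫) / ⟪w, w⟫`. -/
theorem recovery_enhanced_eigenvalue_identity
    {V W : Type*} [NormedAddCommGroup V] [InnerProductSpace ℝ V]
    [NormedAddCommGroup W] [InnerProductSpace ℝ W]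
    (g : V →ₗ[ℝ] W)
    (b : V →ₗ[ℝ] V →ₗ[ℝ] ℝ)
    (hbsymm : ∀ v v' : V, b v v' = b v' v)
    (a : V → V → ℝ)
    (ha : ∀ v v' : V, a v v' = (inner ℝ (g v) (g v') : ℝ) + b v v')
    (lam : ℝ) (u : V)
    (heig : ∀ v : V, a u v = lam * (inner ℝ u v : ℝ))
    (w : V) (hw : w ≠ 0) (r : W)
    (lam' : ℝ)
    (hlam' : lam' = a w w / (inner ℝ w w : ℝ) - ‖g w - r‖ ^ 2 / (inner ℝ w w : ℝ)) :
    lam' - lam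
      = (‖r - g u‖ ^ 2 + 2 * (inner ℝ (r - g u) (g w - r) : ℝ)
          + b (w - u) (w - u) - lam * (inner ℝ (w - u) (w - u) : ℝ))
        / (inner ℝ w w : ℝ) := by
  have hd : (inner ℝ w w : ℝ) ≠ 0 := inner_self_ne_zero.mpr hw
  have h1 : (inner ℝ (g u) (g w) : ℝ) + b u w = lam * inner ℝ u w := by
    rw [← ha]; exact heig w
  have h2 : (inner ℝ (g u) (g u) : ℝ) + b u u = lam * inner ℝ u u := by
    rw [← ha]; exact heig u
  have key : (a w w - ‖g w - r‖ ^ 2) - lam * (inner ℝ w w : ℝ)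
      = ‖r - g u‖ ^ 2 + 2 * (inner ℝ (r - g u) (g w - r) : ℝ)
          + b (w - u) (w - u) - lam * (inner ℝ (w - u) (w - u) : ℝ) := by
    rw [ha]
    simp only [← real_inner_self_eq_norm_sq, inner_sub_left, inner_sub_right,
      map_sub, LinearMap.sub_apply]
    linear_combination 2 * h1 - h2 + hbsymm w u - real_inner_comm r (g u)
      - lam * real_inner_comm u w - real_inner_comm (g w) r
  rw [hlam', ← sub_div, ← key]
  field_simp
end

section
/- Let V and W be real inner product spaces, let g : V → W be a linear map, let b : V × V → ℝ be a symmetric bilinear form, and define the bilinear form a on V by a(v, v') = ⟪g v, g v'⟫_W + b(v, v'). Let λ ∈ ℝ and u ∈ V satisfy a(u, v) = λ·⟪u, v⟫ for all v ∈ V. Let w ∈ V, r ∈ W, and define λ' = a(w, w)/⟪w, w⟫ − ‖g w − r‖²_W/⟪w, w⟫. Suppose there are constants ε₁, ε₂, δ, γ, m > 0 such that ‖r − g u‖_W ≤ ε₁, ‖g w − r‖_W ≤ ε₂, ‖w − u‖ ≤ δ, ⟪w, w⟫ ≥ m, and |b(v, v)| ≤ γ·⟪v, v⟫ for all v ∈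 V. Then |λ' − λ| ≤ (ε₁² + 2·ε₁·ε₂ + (γ + |λ|)·δ²)/m. -/
/-- Quantitative bound behind Theorem 3.5: with `a v v' = ⟪g v, g v'⟫ + b v v'`, an eigenpair
`(λ, u)` of `a`, `λ' = a w w / ⟪w, w⟫ − ‖g w − r‖² / ⟪w, w⟫`, and bounds
`‖r − g u‖ ≤ ε₁`, `‖g w − r‖ ≤ ε₂`, `‖w − u‖ ≤ δ`, `⟪w, w⟫ ≥ m`, `|b v v| ≤ γ ⟪v, v⟫`,
one has `|λ' − λ| ≤ (ε₁² + 2 ε₁ ε₂ + (γ + |λ|) δ²) / m`. -/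
theorem recovery_enhanced_eigenvalue_bound
    {V W : Type*} [NormedAddCommGroup V] [InnerProductSpace ℝ V]
    [NormedAddCommGroup W] [InnerProductSpace ℝ W]
    (g : V →ₗ[ℝ] W)
    (b : V →ₗ[ℝ] V →ₗ[ℝ] ℝ)
    (hbsymm : ∀ v v' : V, b v v' = b v' v)
    (a : V → V → ℝ)
    (ha : ∀ v v' : V, a v v' = (inner ℝ (g v) (g v') : ℝ) + b v v')
    (lam : ℝ) (u : V)
    (heig : ∀ v : V, a u v = lam * (inner ℝ u v : ℝ))
    (w : V) (r : W)
    (lam' : ℝ)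
    (hlam' : lam' = a w w / (inner ℝ w w : ℝ) - ‖g w - r‖ ^ 2 / (inner ℝ w w : ℝ))
    (ε₁ ε₂ δ γ m : ℝ)
    (hε₁ : 0 < ε₁) (hε₂ : 0 < ε₂) (hδ : 0 < δ) (hγ : 0 < γ) (hm : 0 < m)
    (h1 : ‖r - g u‖ ≤ ε₁)
    (h2 : ‖g w - r‖ ≤ ε₂)
    (h3 : ‖w - u‖ ≤ δ)
    (h4 : m ≤ (inner ℝ w w : ℝ))
    (h5 : ∀ v : V, |b v v| ≤ γ * (inner ℝ v v : ℝ)) :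
    |lam' - lam| ≤ (ε₁ ^ 2 + 2 * ε₁ * ε₂ + (γ + |lam|) * δ ^ 2) / m := by
  have hip : (0:ℝ) < (inner ℝ w w : ℝ) := lt_of_lt_of_le hm h4
  set e : V := w - u with he
  have hw : w = u + e := by simp [he]
  have heigv : ∀ v : V, (inner ℝ (g u) (g v) : ℝ) + b u v = lam * (inner ℝ u v : ℝ) := by
    intro v
    have := heig v
    rwa [ha] at this
  -- expansion of a w w and ⟪w,w⟫
  have hinner_w : (inner ℝ w w : ℝ)
      = (inner ℝ u u : ℝ) + 2 * (inner ℝ u e : ℝ) + (inner ℝ e e : ℝ) := by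
    rw [hw, real_inner_add_add_self]
  have haw : a w w = (inner ℝ (g u) (g u) : ℝ) + 2 * (inner ℝ (g u) (g e) : ℝ)
      + (inner ℝ (g e) (g e) : ℝ) + (b u u + 2 * b u e + b e e) := by
    rw [ha, hw, map_add, real_inner_add_add_self, map_add]
    simp only [LinearMap.add_apply, map_add]
    rw [hbsymm e u]; ring
  -- key identity
  have key : a w w - lam * (inner ℝ w w : ℝ)
      = (inner ℝ (g e) (g e) : ℝ) + b e e - lam * (inner ℝ e e : ℝ) := by
    have h1' := heigv u
    have h2' := heigv e
    rw [haw, hinner_w]; linarith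
  -- expand ⟪g e, g e⟫
  have hge : g e = (g w - r) + (r - g u) := by rw [he, map_sub]; abel
  have hgee : (inner ℝ (g e) (g e) : ℝ)
      = ‖g w - r‖ ^ 2 + 2 * (inner ℝ (g w - r) (r - g u) : ℝ) + ‖r - g u‖ ^ 2 := by
    rw [real_inner_self_eq_norm_sq, hge, norm_add_sq_real]
  -- lam' - lam as a quotient
  have hdiff : lam' - lam
      = (2 * (inner ℝ (g w - r) (r - g u) : ℝ) + ‖r - g u‖ ^ 2 + b e e
          - lam * (inner ℝ e e : ℝ)) / (inner ℝ w w : ℝ) := by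
    rw [hlam']
    field_simp
    linarith [key, hgee]
  -- numerator bound
  have hee : (inner ℝ e e : ℝ) ≤ δ ^ 2 := by
    rw [real_inner_self_eq_norm_sq]
    have : ‖e‖ ≤ δ := h3
    nlinarith [norm_nonneg e]
  have hee0 : (0:ℝ) ≤ (inner ℝ e e : ℝ) := real_inner_self_nonneg
  have hCS : |(inner ℝ (g w - r) (r - g u) : ℝ)| ≤ ε₂ * ε₁ := by
    exact le_trans (abs_real_inner_le_norm _ _)
      (mul_le_mul h2 h1 (norm_nonneg _) hε₂.le)
  have hb := h5 e
  have hnum : |2 * (inner ℝ (g w - r) (r - g u) : ℝ) + ‖r - g u‖ ^ 2 + b e e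
      - lam * (inner ℝ e e : ℝ)| ≤ ε₁ ^ 2 + 2 * ε₁ * ε₂ + (γ + |lam|) * δ ^ 2 := by
    have h1sq : ‖r - g u‖ ^ 2 ≤ ε₁ ^ 2 := by nlinarith [norm_nonneg (r - g u)]
    have hlam_abs : |lam * (inner ℝ e e : ℝ)| ≤ |lam| * δ ^ 2 := by
      rw [abs_mul, abs_of_nonneg hee0]
      exact mul_le_mul_of_nonneg_left hee (abs_nonneg lam)
    have hbe : |b e e| ≤ γ * δ ^ 2 :=
      le_trans hb (mul_le_mul_of_nonneg_left hee hγ.le)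
    obtain ⟨c1, c2⟩ := abs_le.mp hCS
    obtain ⟨l1, l2⟩ := abs_le.mp hlam_abs
    obtain ⟨b1, b2⟩ := abs_le.mp hbe
    rw [abs_le]
    constructor <;> linarith [sq_nonneg ‖r - g u‖]
  calc |lam' - lam| = |2 * (inner ℝ (g w - r) (r - g u) : ℝ) + ‖r - g u‖ ^ 2 + b e e
          - lam * (inner ℝ e e : ℝ)| / (inner ℝ w w : ℝ) := by
        rw [hdiff, abs_div, abs_of_pos hip]
    _ ≤ (ε₁ ^ 2 + 2 * ε₁ * ε₂ + (γ + |lam|) * δ ^ 2) / m := by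
        apply div_le_div₀ (by positivity) hnum hm h4
end
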